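/- Let X ⊆ ℝ and Y ⊆ ℝ be finite sets and u : X × Y → ℝ strictly supermodular, i.e., u(x,y) - u(x,y') > u(x',y) - u(x',y') whenever x > x' and y > y'. Let γ be a probability distribution on X × Y whose X-marginal has full support. Then γ is the unique maximizer of ∑ u dγ' over distributions γ' with the same marginals as γ if and only if the support of γ is co-monotone (i.e., for any (x,y) and (x',y') in the support, x > x' implies y ≥ y'). -/
import Mathlib

set_option linter.unusedSectionVars false
set_option linter.unusedVariables false


/-- γ is a probability distribution on a finite type. -/
def IsDist {Z : Type*} [Fintype Z] (γ : Z → ℝ) : Prop :=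
  (∀ z, 0 ≤ γ z) ∧ ∑ z, γ z = 1

/-- u is strictly supermodular. -/
def StrictSupermod {X Y : Type*} [LT X] [LT Y] (u : X → Y → ℝ) : Prop :=
  ∀ x x' y y', x' < x → y' < y → u x y' + u x' y < u x y + u x' y'

/-- A set is co-monotone: higher first coordinate implies weakly higher second coordinate. -/
def CoMono {X Y : Type*} [LT X] [LE Y] (S : Set (X × Y)) : Prop :=
  ∀ p ∈ S, ∀ q ∈ S, q.1 < p.1 → q.2 ≤ p.2


section Aux
variable {X Y : Type*} [Fintype X] [Fintype Y] [LinearOrder X] [LinearOrder Y]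

open Finset

lemma row_ind (a : X) (c : X × Y) :
    ∑ b : Y, (if (a, b) = c then (1:ℝ) else 0) = if a = c.1 then 1 else 0 := by
  obtain ⟨cx, cy⟩ := c
  by_cases h : a = cx
  · subst h; simp [Prod.ext_iff]
  · simp [Prod.ext_iff, h]

lemma col_ind (b : Y) (c : X × Y) :
    ∑ a : X, (if (a, b) = c then (1:ℝ) else 0) = if b = c.2 then 1 else 0 := by
  obtain ⟨cx, cy⟩ := c
  by_cases h : b = cy
  · subst h; simp [Prod.ext_iff]
  · simp [Prod.ext_iff, h]

lemma swap_improve (u : X → Y → ℝ) (hu : StrictSupermod u)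
    (g : X × Y → ℝ) (hg : IsDist g)
    {x x' : X} {y y' : Y} (hx : x' < x) (hy : y < y')
    (hp : 0 < g (x, y)) (hq : 0 < g (x', y')) :
    ∃ g' : X × Y → ℝ, IsDist g' ∧
      (∀ a, ∑ b, g' (a, b) = ∑ b, g (a, b)) ∧
      (∀ b, ∑ a, g' (a, b) = ∑ a, g (a, b)) ∧
      ∑ p : X × Y, u p.1 p.2 * g p < ∑ p : X × Y, u p.1 p.2 * g' p := by
  have hxne : x ≠ x' := ne_of_gt hx
  have hyne : y ≠ y' := ne_of_lt hy
  set ε : ℝ := min (g (x, y)) (g (x', y')) with hε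
  have hε0 : 0 < ε := lt_min hp hq
  set δ : X × Y → ℝ := fun r =>
    (if r = (x, y') then 1 else 0) + (if r = (x', y) then 1 else 0)
      - (if r = (x, y) then 1 else 0) - (if r = (x', y') then 1 else 0) with hδ
  refine ⟨fun r => g r + ε * δ r, ⟨?_, ?_⟩, ?_, ?_, ?_⟩
  · intro r
    dsimp only
    by_cases h1 : r = (x, y)
    · have : δ r = -1 := by simp [hδ, h1, Prod.ext_iff, hxne, hyne]
      rw [this]
      have : ε ≤ g (x, y) := min_le_left _ _
      rw [h1]; linarith
    · by_cases h2 : r = (x', y')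
      · have : δ r = -1 := by
          simp [hδ, h2, Prod.ext_iff, hxne.symm, hyne.symm]
        rw [this]
        have : ε ≤ g (x', y') := min_le_right _ _
        rw [h2]; linarith
      · have hd : 0 ≤ δ r := by
          simp only [hδ]
          rw [if_neg h1, if_neg h2]
          split_ifs <;> norm_num
        have h0 := hg.1 r
        nlinarith
  · have : ∑ r : X × Y, δ r = 0 := by
      simp [hδ, Finset.sum_add_distrib, Finset.sum_sub_distrib, Finset.sum_ite_eq']
    rw [Finset.sum_add_distrib, hg.2, ← Finset.mul_sum, this]
    ring
  · intro a
    have : ∑ b, δ (a, b) = 0 := by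
      simp only [hδ]
      rw [Finset.sum_sub_distrib, Finset.sum_sub_distrib, Finset.sum_add_distrib,
        row_ind, row_ind, row_ind, row_ind]
      simp
    rw [Finset.sum_add_distrib, ← Finset.mul_sum, this]
    ring
  · intro b
    have : ∑ a, δ (a, b) = 0 := by
      simp only [hδ]
      rw [Finset.sum_sub_distrib, Finset.sum_sub_distrib, Finset.sum_add_distrib,
        col_ind, col_ind, col_ind, col_ind]
      simp
    rw [Finset.sum_add_distrib, ← Finset.mul_sum, this]
    ring
  · have hval : ∑ p : X × Y, u p.1 p.2 * δ p
        = u x y' + u x' y - u x y - u x' y' := by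
      simp only [hδ]
      simp [mul_add, mul_sub, Finset.sum_add_distrib, Finset.sum_sub_distrib,
        mul_ite, mul_one, mul_zero, Finset.sum_ite_eq']
    have hkey := hu x x' y' y hx hy
    have : ∑ p : X × Y, u p.1 p.2 * (g p + ε * δ p)
        = ∑ p : X × Y, u p.1 p.2 * g p + ε * (u x y' + u x' y - u x y - u x' y') := by
      rw [show (fun p : X × Y => u p.1 p.2 * (g p + ε * δ p))
          = fun p : X × Y => u p.1 p.2 * g p + ε * (u p.1 p.2 * δ p) by
        funext p; ring]
      rw [Finset.sum_add_distrib, ← Finset.mul_sum, hval]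
    rw [this]
    nlinarith

end Aux
section Uniq
variable {X Y : Type*} [Fintype X] [Fintype Y] [LinearOrder X] [LinearOrder Y]

open Finset

noncomputable def Hcdf (f : X × Y → ℝ) (x : X) (y : Y) : ℝ :=
  ∑ p : X × Y, if p.1 ≤ x ∧ p.2 ≤ y then f p else 0

noncomputable def Fcdf (f : X × Y → ℝ) (x : X) : ℝ :=
  ∑ p : X × Y, if p.1 ≤ x then f p else 0

noncomputable def Gcdf (f : X × Y → ℝ) (y : Y) : ℝ :=
  ∑ p : X × Y, if p.2 ≤ y then f p else 0

lemma Hcdf_eq_min (f : X × Y → ℝ) (hf0 : ∀ p, 0 ≤ f p)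
    (hfc : CoMono {p : X × Y | 0 < f p}) (x : X) (y : Y) :
    Hcdf f x y = min (Fcdf f x) (Gcdf f y) := by
  have hHF : Hcdf f x y ≤ Fcdf f x := by
    apply Finset.sum_le_sum
    intro p _
    by_cases h : p.1 ≤ x ∧ p.2 ≤ y
    · rw [if_pos h, if_pos h.1]
    · rw [if_neg h]
      split_ifs with h2
      · exact hf0 p
      · exact le_refl 0
  have hHG : Hcdf f x y ≤ Gcdf f y := by
    apply Finset.sum_le_sum
    intro p _
    by_cases h : p.1 ≤ x ∧ p.2 ≤ y
    · rw [if_pos h, if_pos h.2]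
    · rw [if_neg h]
      split_ifs with h2
      · exact hf0 p
      · exact le_refl 0
  by_cases hw : ∃ p : X × Y, 0 < f p ∧ p.1 ≤ x ∧ ¬ p.2 ≤ y
  · -- then Gcdf f y = Hcdf f x y
    obtain ⟨p, hp, hpx, hpy⟩ := hw
    have hG : Hcdf f x y = Gcdf f y := by
      apply Finset.sum_congr rfl
      intro q _
      by_cases h : q.1 ≤ x ∧ q.2 ≤ y
      · rw [if_pos h, if_pos h.2]
      · by_cases h2 : q.2 ≤ y
        · rw [if_neg h, if_pos h2]
        -- q.2 ≤ y but ¬ q.1 ≤ x : show f q = 0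
          have hqx : ¬ q.1 ≤ x := fun hx => h ⟨hx, h2⟩
          by_contra hne
          have hq : 0 < f q := lt_of_le_of_ne (hf0 q) hne
          have hlt : p.1 < q.1 := lt_of_le_of_lt hpx (not_le.mp hqx)
          have := hfc q hq p hp hlt
          exact hpy (le_trans this h2)
        · rw [if_neg h, if_neg h2]
    rw [hG, min_eq_right (hG ▸ hHF)]
  · -- no mass in {p.1 ≤ x, p.2 > y}: Fcdf f x = Hcdf f x y
    push_neg at hw
    have hF : Hcdf f x y = Fcdf f x := by
      apply Finset.sum_congr rfl
      intro q _
      by_cases h : q.1 ≤ x ∧ q.2 ≤ y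
      · rw [if_pos h, if_pos h.1]
      · by_cases h1 : q.1 ≤ x
        · rw [if_neg h, if_pos h1]
          have h2 : ¬ q.2 ≤ y := fun hy => h ⟨h1, hy⟩
          have := hw q
          by_contra hne
          have hq : 0 < f q := lt_of_le_of_ne (hf0 q) hne
          exact h2 (this hq h1)
        · rw [if_neg h, if_neg h1]
    rw [hF, min_eq_left (hF ▸ hHG)]

lemma comono_unique (g h : X × Y → ℝ) (hg0 : ∀ p, 0 ≤ g p) (hh0 : ∀ p, 0 ≤ h p)
    (hrow : ∀ a, ∑ b, g (a, b) = ∑ b, h (a, b))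
    (hcol : ∀ b, ∑ a, g (a, b) = ∑ a, h (a, b))
    (hgc : CoMono {p : X × Y | 0 < g p}) (hhc : CoMono {p : X × Y | 0 < h p}) :
    g = h := by
  have hF : ∀ x, Fcdf g x = Fcdf h x := by
    intro x
    unfold Fcdf
    rw [Fintype.sum_prod_type, Fintype.sum_prod_type]
    apply Finset.sum_congr rfl
    intro a _
    by_cases hax : a ≤ x
    · simp only [hax, if_true]
      exact hrow a
    · simp [hax]
  have hG : ∀ y, Gcdf g y = Gcdf h y := by
    intro y
    unfold Gcdf
    rw [Fintype.sum_prod_type_right, Fintype.sum_prod_type_right]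
    apply Finset.sum_congr rfl
    intro b _
    by_cases hby : b ≤ y
    · simp only [hby, if_true]
      exact hcol b
    · simp [hby]
  have hH : ∀ x y, Hcdf g x y = Hcdf h x y := by
    intro x y
    rw [Hcdf_eq_min g hg0 hgc, Hcdf_eq_min h hh0 hhc, hF, hG]
  -- inversion: values determined by the joint cdf
  have key : ∀ n : ℕ, ∀ x : X, ∀ y : Y,
      ((Finset.univ.filter (fun p : X × Y => p.1 ≤ x ∧ p.2 ≤ y)).card ≤ n) →
      g (x, y) = h (x, y) := by
    intro n
    induction n with
    | zero =>
      intro x y hc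
      exfalso
      have : (x, y) ∈ Finset.univ.filter (fun p : X × Y => p.1 ≤ x ∧ p.2 ≤ y) := by
        simp
      have := Finset.card_pos.mpr ⟨_, this⟩
      omega
    | succ n ih =>
      intro x y hc
      set T := Finset.univ.filter (fun p : X × Y => p.1 ≤ x ∧ p.2 ≤ y) with hT
      have hmem : (x, y) ∈ T := by simp [hT]
      have hsum : ∑ p ∈ T, g p = ∑ p ∈ T, h p := by
        have := hH x y
        unfold Hcdf at this
        rwa [← Finset.sum_filter, ← Finset.sum_filter] at this
      rw [← Finset.add_sum_erase _ g hmem, ← Finset.add_sum_erase _ h hmem] at hsum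
      have htail : ∑ p ∈ T.erase (x, y), g p = ∑ p ∈ T.erase (x, y), h p := by
        apply Finset.sum_congr rfl
        intro p hp
        have hpT := Finset.mem_of_mem_erase hp
        have hpne : p ≠ (x, y) := Finset.ne_of_mem_erase hp
        simp only [hT, Finset.mem_filter] at hpT
        have hsub : (Finset.univ.filter (fun q : X × Y => q.1 ≤ p.1 ∧ q.2 ≤ p.2))
            ⊆ T.erase (x, y) := by
          intro q hq
          simp only [Finset.mem_filter, Finset.mem_univ, true_and] at hq
          rw [Finset.mem_erase]
          constructor
          · rintro rfl
            exact hpne (Prod.ext (le_antisymm hpT.2.1 hq.1) (le_antisymm hpT.2.2 hq.2))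
          · simp only [hT, Finset.mem_filter, Finset.mem_univ, true_and]
            exact ⟨le_trans hq.1 hpT.2.1, le_trans hq.2 hpT.2.2⟩
        have hcard : (Finset.univ.filter (fun q : X × Y => q.1 ≤ p.1 ∧ q.2 ≤ p.2)).card ≤ n := by
          have h1 := Finset.card_le_card hsub
          have h2 := Finset.card_erase_of_mem hmem
          omega
        have := ih p.1 p.2 hcard
        rwa [Prod.mk.eta] at this
      linarith
  funext p
  obtain ⟨x, y⟩ := p
  exact key _ x y le_rfl

end Uniq

section Main
variable {X Y : Type*} [Fintype X] [Fintype Y] [LinearOrder X] [LinearOrder Y]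

lemma max_comono (u : X → Y → ℝ) (hu : StrictSupermod u)
    (g : X × Y → ℝ) (hg : IsDist g)
    (hmax : ∀ g' : X × Y → ℝ, IsDist g' →
      (∀ a, ∑ b, g' (a, b) = ∑ b, g (a, b)) →
      (∀ b, ∑ a, g' (a, b) = ∑ a, g (a, b)) →
      ∑ p : X × Y, u p.1 p.2 * g' p ≤ ∑ p : X × Y, u p.1 p.2 * g p) :
    CoMono {p : X × Y | 0 < g p} := by
  intro p hp q hq hlt
  by_contra hle
  push_neg at hle
  simp only [Set.mem_setOf_eq] at hp hq
  rw [show p = (p.1, p.2) from rfl] at hp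
  rw [show q = (q.1, q.2) from rfl] at hq
  obtain ⟨g', hd, hr, hc, hv⟩ := swap_improve u hu g hg hlt hle hp hq
  exact absurd (hmax g' hd hr hc) (not_le.mpr hv)

lemma exists_max (u : X → Y → ℝ) (γ : X × Y → ℝ) (hγ : IsDist γ) :
    ∃ g : X × Y → ℝ, (IsDist g ∧ (∀ a, ∑ b, g (a, b) = ∑ b, γ (a, b)) ∧
        (∀ b, ∑ a, g (a, b) = ∑ a, γ (a, b))) ∧
      ∀ g' : X × Y → ℝ, IsDist g' → (∀ a, ∑ b, g' (a, b) = ∑ b, γ (a, b)) →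
        (∀ b, ∑ a, g' (a, b) = ∑ a, γ (a, b)) →
        ∑ p : X × Y, u p.1 p.2 * g' p ≤ ∑ p : X × Y, u p.1 p.2 * g p := by
  set S : Set (X × Y → ℝ) := {g | IsDist g ∧ (∀ a, ∑ b, g (a, b) = ∑ b, γ (a, b)) ∧
    (∀ b, ∑ a, g (a, b) = ∑ a, γ (a, b))} with hS
  have hne : S.Nonempty := ⟨γ, hγ, fun a => rfl, fun b => rfl⟩
  have hsub : S ⊆ Set.univ.pi (fun _ : X × Y => Set.Icc (0:ℝ) 1) := by
    intro g hg p _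
    refine ⟨hg.1.1 p, ?_⟩
    rw [← hg.1.2]
    exact Finset.single_le_sum (fun z _ => hg.1.1 z) (Finset.mem_univ p)
  have hclosed : IsClosed S := by
    have e : S = {g : X × Y → ℝ | ∀ p, 0 ≤ g p}
        ∩ {g : X × Y → ℝ | ∑ z, g z = 1}
        ∩ (⋂ a : X, {g : X × Y → ℝ | ∑ b, g (a, b) = ∑ b, γ (a, b)})
        ∩ (⋂ b : Y, {g : X × Y → ℝ | ∑ a, g (a, b) = ∑ a, γ (a, b)}) := by
      ext g
      simp only [hS, Set.mem_setOf_eq, Set.mem_inter_iff, Set.mem_iInter, IsDist]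
      tauto
    rw [e]
    refine IsClosed.inter (IsClosed.inter (IsClosed.inter ?_ ?_) ?_) ?_
    · have e2 : {g : X × Y → ℝ | ∀ p, 0 ≤ g p} = ⋂ p : X × Y, {g : X × Y → ℝ | 0 ≤ g p} := by
        ext g; simp [Set.mem_iInter]
      rw [e2]
      exact isClosed_iInter fun p => isClosed_le continuous_const (continuous_apply p)
    · exact isClosed_eq (continuous_finset_sum _ fun z _ => continuous_apply z) continuous_const
    · exact isClosed_iInter fun a =>
        isClosed_eq (continuous_finset_sum _ fun b _ => continuous_apply (a, b)) continuous_const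
    · exact isClosed_iInter fun b =>
        isClosed_eq (continuous_finset_sum _ fun a _ => continuous_apply (a, b)) continuous_const
  have hcomp : IsCompact S :=
    IsCompact.of_isClosed_subset (isCompact_univ_pi fun _ => isCompact_Icc) hclosed hsub
  have hcont : Continuous fun g : X × Y → ℝ => ∑ p : X × Y, u p.1 p.2 * g p :=
    continuous_finset_sum _ fun p _ => continuous_const.mul (continuous_apply p)
  obtain ⟨g, hgS, hmax⟩ := hcomp.exists_isMaxOn hne hcont.continuousOn
  exact ⟨g, hgS, fun g' h1 h2 h3 => (isMaxOn_iff.mp hmax) g' ⟨h1, h2, h3⟩⟩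

end Main


/-- For strictly supermodular u and γ whose X-marginal has full support: γ is the unique
maximizer of the optimal transport problem with its own marginals iff its support is
co-monotone. -/
theorem stmt3 {X Y : Type*} [Fintype X] [Fintype Y] [LinearOrder X] [LinearOrder Y]
    (u : X → Y → ℝ) (hu : StrictSupermod u)
    (γ : X × Y → ℝ) (hγ : IsDist γ)
    (hfull : ∀ x, 0 < ∑ y, γ (x, y)) :
    (∀ γ' : X × Y → ℝ, IsDist γ' →
        (∀ x, ∑ y, γ' (x, y) = ∑ y, γ (x, y)) →
        (∀ y, ∑ x, γ' (x, y) = ∑ x, γ (x, y)) →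
        γ' ≠ γ →
        ∑ p : X × Y, u p.1 p.2 * γ' p < ∑ p : X × Y, u p.1 p.2 * γ p)
      ↔ CoMono {p : X × Y | 0 < γ p} := by
  constructor
  · intro hmax
    apply max_comono u hu γ hγ
    intro g' hd hr hc
    by_cases h : g' = γ
    · rw [h]
    · exact le_of_lt (hmax g' hd hr hc h)
  · intro hco γ' hd' hr' hc' hne
    obtain ⟨g, ⟨hgd, hgr, hgc⟩, hmax⟩ := exists_max u γ hγ
    have hgco : CoMono {p : X × Y | 0 < g p} := by
      apply max_comono u hu g hgd
      intro g'' h1 h2 h3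
      exact hmax g'' h1 (fun a => (h2 a).trans (hgr a)) (fun b => (h3 b).trans (hgc b))
    have hgγ : g = γ := comono_unique g γ hgd.1 hγ.1 hgr hgc hgco hco
    rw [← hgγ]
    rcases lt_or_eq_of_le (hmax γ' hd' hr' hc') with h | h
    · exact h
    · exfalso
      have hco' : CoMono {p : X × Y | 0 < γ' p} := by
        apply max_comono u hu γ' hd'
        intro g'' h1 h2 h3
        calc ∑ p : X × Y, u p.1 p.2 * g'' p
            ≤ ∑ p : X × Y, u p.1 p.2 * g p :=
              hmax g'' h1 (fun a => (h2 a).trans (hr' a)) (fun b => (h3 b).trans (hc' b))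
          _ = ∑ p : X × Y, u p.1 p.2 * γ' p := h.symm
      exact hne (comono_unique γ' γ hd'.1 hγ.1 hr' hc' hco' hco)
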